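/- Suppose θ₁,…,θ_d, Θ₁,…,Θ_d ∈ ℝ are such that 0 lies in the convex hull of {e^{i(θᵢ+Θⱼ)}}ᵢ,ⱼ (global distinguishability). Then 0 lies in the convex hull of {e^{i(θᵢ−θⱼ)}}ᵢ,ⱼ or 0 lies in the convex hull of {e^{i(Θᵢ−Θⱼ)}}ᵢ,ⱼ. -/

import Mathlib

open Complex Real

/-- If `0 < cos x` and `|x| ≤ π` then `|x| < π/2`. -/
lemma abs_lt_pi_div_two_of_cos_pos {x : ℝ} (h : 0 < Real.cos x) (hx : |x| ≤ π) :
    |x| < π / 2 := by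
  by_contra hc
  push_neg at hc
  have : Real.cos x ≤ 0 := by
    rw [← Real.cos_abs]
    exact Real.cos_nonpos_of_pi_div_two_le_of_le hc (by linarith [Real.pi_pos])
  linarith

/-- If `0` is not in the convex hull of the set of phase differences, then all the
cosines of the differences are positive. -/
lemma cos_pos_of_not_mem_hull {d : ℕ} (φ : Fin d → ℝ)
    (h : (0 : ℂ) ∉ convexHull ℝ
      {z : ℂ | ∃ i j, z = Complex.exp (Complex.I * (φ i - φ j))}) :
    ∀ i j, 0 < Real.cos (φ i - φ j) := by
  intro i j
  by_contra hc
  push_neg at hc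
  apply h
  set S : Set ℂ := {z : ℂ | ∃ i j, z = Complex.exp (Complex.I * (φ i - φ j))} with hS
  set x : ℝ := φ i - φ j with hx
  have e1 : Complex.I * ((φ i : ℂ) - (φ j : ℂ)) = (x : ℂ) * Complex.I := by
    rw [hx]; push_cast; ring
  have e2 : Complex.I * ((φ j : ℂ) - (φ i : ℂ)) = ((-x : ℝ) : ℂ) * Complex.I := by
    rw [hx]; push_cast; ring
  have h1 : Complex.exp ((x : ℂ) * Complex.I) ∈ convexHull ℝ S := by
    apply subset_convexHull ℝ S
    exact ⟨i, j, by rw [e1]⟩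
  have h2 : Complex.exp (((-x : ℝ) : ℂ) * Complex.I) ∈ convexHull ℝ S := by
    apply subset_convexHull ℝ S
    exact ⟨j, i, by rw [e2]⟩
  have hone : (1 : ℂ) ∈ convexHull ℝ S := by
    apply subset_convexHull ℝ S
    exact ⟨i, i, by simp⟩
  set c : ℝ := Real.cos x with hcdef
  have hm : ((c : ℝ) : ℂ) ∈ convexHull ℝ S := by
    have key := (convex_convexHull ℝ S) h1 h2 (by norm_num : (0:ℝ) ≤ 1/2)
      (by norm_num : (0:ℝ) ≤ 1/2) (by norm_num)
    have heq : (1/2 : ℝ) • Complex.exp ((x : ℂ) * Complex.I)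
        + (1/2 : ℝ) • Complex.exp (((-x : ℝ) : ℂ) * Complex.I) = ((c : ℝ) : ℂ) := by
      have r1 := Complex.exp_ofReal_mul_I_re x
      have r2 := Complex.exp_ofReal_mul_I_re (-x)
      have i1 := Complex.exp_ofReal_mul_I_im x
      have i2 := Complex.exp_ofReal_mul_I_im (-x)
      apply Complex.ext
      · simp only [Complex.add_re, Complex.smul_re, r1, r2, Complex.ofReal_re, smul_eq_mul]
        rw [Real.cos_neg]
        linarith [hcdef]
      · simp only [Complex.add_im, Complex.smul_im, i1, i2, Complex.ofReal_im, smul_eq_mul]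
        rw [Real.sin_neg]; ring
    rwa [heq] at key
  set t : ℝ := 1 / (1 - c) with htdef
  have hc1 : (0:ℝ) < 1 - c := by linarith
  have ht0 : 0 ≤ t := by positivity
  have ht1 : 0 ≤ 1 - t := by
    have : t ≤ 1 := by
      rw [htdef, div_le_one hc1]; linarith
    linarith
  have key := (convex_convexHull ℝ S) hm hone ht0 ht1 (by ring)
  have hval : t * c + (1 - t) = 0 := by
    rw [htdef]; field_simp; ring
  have heq : t • ((c : ℝ) : ℂ) + (1 - t) • (1 : ℂ) = 0 := by
    have hz : ((t * c + (1 - t) : ℝ) : ℂ) = 0 := by rw [hval]; norm_num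
    calc t • ((c : ℝ) : ℂ) + (1 - t) • (1 : ℂ)
        = ((t * c + (1 - t) : ℝ) : ℂ) := by
          rw [Complex.real_smul, Complex.real_smul]; push_cast; ring
      _ = 0 := hz
  rwa [heq] at key

theorem distinguishable_implies_markable (d : ℕ) (θ Θ : Fin d → ℝ)
    (h : (0 : ℂ) ∈ convexHull ℝ
      {z : ℂ | ∃ i j, z = Complex.exp (Complex.I * (θ i + Θ j))}) :
    (0 : ℂ) ∈ convexHull ℝ
      {z : ℂ | ∃ i j, z = Complex.exp (Complex.I * (θ i - θ j))} ∨
    (0 : ℂ) ∈ convexHull ℝ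
      {z : ℂ | ∃ i j, z = Complex.exp (Complex.I * (Θ i - Θ j))} := by
  by_contra hcon
  push_neg at hcon
  obtain ⟨hA, hB⟩ := hcon
  have hcosθ := cos_pos_of_not_mem_hull θ hA
  have hcosΘ := cos_pos_of_not_mem_hull Θ hB
  -- d = 0 is impossible
  rcases Nat.eq_zero_or_pos d with hd | hd
  · subst hd
    have : {z : ℂ | ∃ i j, z = Complex.exp (Complex.I * (θ i + Θ j))} = ∅ := by
      ext z; simp [Fin.isEmpty]
    rw [this, convexHull_empty] at h
    exact h
  set i0 : Fin d := ⟨0, hd⟩ with hi0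
  -- reduced angles
  set α : Fin d → ℝ := fun i => toIocMod Real.two_pi_pos (-π) (θ i - θ i0) with hαdef
  set β : Fin d → ℝ := fun i => toIocMod Real.two_pi_pos (-π) (Θ i - Θ i0) with hβdef
  have hkα : ∀ i, ∃ n : ℤ, θ i - θ i0 = α i + n * (2 * π) := by
    intro i
    refine ⟨toIocDiv Real.two_pi_pos (-π) (θ i - θ i0), ?_⟩
    have := toIocMod_add_toIocDiv_zsmul Real.two_pi_pos (-π) (θ i - θ i0)
    rw [zsmul_eq_mul] at this
    linarith [this]
  have hkβ : ∀ i, ∃ n : ℤ, Θ i - Θ i0 = β i + n * (2 * π) := by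
    intro i
    refine ⟨toIocDiv Real.two_pi_pos (-π) (Θ i - Θ i0), ?_⟩
    have := toIocMod_add_toIocDiv_zsmul Real.two_pi_pos (-π) (Θ i - Θ i0)
    rw [zsmul_eq_mul] at this
    linarith [this]
  have hαIoc : ∀ i, α i ∈ Set.Ioc (-π) π := by
    intro i
    have := toIocMod_mem_Ioc Real.two_pi_pos (-π) (θ i - θ i0)
    rwa [show -π + 2 * π = π by ring] at this
  have hβIoc : ∀ i, β i ∈ Set.Ioc (-π) π := by
    intro i
    have := toIocMod_mem_Ioc Real.two_pi_pos (-π) (Θ i - Θ i0)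
    rwa [show -π + 2 * π = π by ring] at this
  -- cosines transfer
  have hcosα : ∀ i j, 0 < Real.cos (α i - α j) := by
    intro i j
    obtain ⟨n, hn⟩ := hkα i
    obtain ⟨m, hm⟩ := hkα j
    have : Real.cos (α i - α j) = Real.cos (θ i - θ j) := by
      have hx : θ i - θ j = (α i - α j) + (n - m : ℤ) * (2 * π) := by
        push_cast; linarith
      rw [hx, Real.cos_add_int_mul_two_pi]
    rw [this]; exact hcosθ i j
  have hcosβ : ∀ i j, 0 < Real.cos (β i - β j) := by
    intro i j
    obtain ⟨n, hn⟩ := hkβ i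
    obtain ⟨m, hm⟩ := hkβ j
    have : Real.cos (β i - β j) = Real.cos (Θ i - Θ j) := by
      have hx : Θ i - Θ j = (β i - β j) + (n - m : ℤ) * (2 * π) := by
        push_cast; linarith
      rw [hx, Real.cos_add_int_mul_two_pi]
    rw [this]; exact hcosΘ i j
  -- the reduced angles lie in (-π/2, π/2) and their mutual distances are < π/2
  have hαabs : ∀ i, |α i| < π / 2 := by
    intro i
    obtain ⟨n, hn⟩ := hkα i
    have hc : Real.cos (α i) = Real.cos (θ i - θ i0) := by
      rw [hn, Real.cos_add_int_mul_two_pi]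
    exact abs_lt_pi_div_two_of_cos_pos (hc ▸ hcosθ i i0)
      (abs_le.2 ⟨le_of_lt (hαIoc i).1, (hαIoc i).2⟩)
  have hβabs : ∀ i, |β i| < π / 2 := by
    intro i
    obtain ⟨n, hn⟩ := hkβ i
    have hc : Real.cos (β i) = Real.cos (Θ i - Θ i0) := by
      rw [hn, Real.cos_add_int_mul_two_pi]
    exact abs_lt_pi_div_two_of_cos_pos (hc ▸ hcosΘ i i0)
      (abs_le.2 ⟨le_of_lt (hβIoc i).1, (hβIoc i).2⟩)
  have hαd : ∀ i j, |α i - α j| < π / 2 := by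
    intro i j
    apply abs_lt_pi_div_two_of_cos_pos (hcosα i j)
    have h1 := abs_add_le (α i) (-(α j))
    rw [abs_neg] at h1
    have h2 : |α i - α j| ≤ |α i| + |α j| := by rw [sub_eq_add_neg]; exact h1
    have := hαabs i; have := hαabs j
    linarith
  have hβd : ∀ i j, |β i - β j| < π / 2 := by
    intro i j
    apply abs_lt_pi_div_two_of_cos_pos (hcosβ i j)
    have h1 := abs_add_le (β i) (-(β j))
    rw [abs_neg] at h1
    have h2 : |β i - β j| ≤ |β i| + |β j| := by rw [sub_eq_add_neg]; exact h1
    have := hβabs i; have := hβabs j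
    linarith
  -- extremal indices
  obtain ⟨iM, -, hiM⟩ := Finset.exists_max_image Finset.univ α ⟨i0, Finset.mem_univ i0⟩
  obtain ⟨im, -, him⟩ := Finset.exists_min_image Finset.univ α ⟨i0, Finset.mem_univ i0⟩
  obtain ⟨jM, -, hjM⟩ := Finset.exists_max_image Finset.univ β ⟨i0, Finset.mem_univ i0⟩
  obtain ⟨jm, -, hjm⟩ := Finset.exists_min_image Finset.univ β ⟨i0, Finset.mem_univ i0⟩
  set μ : ℝ := (α im + α iM + β jm + β jM) / 2 with hμ
  have hkey : ∀ i j, 0 < Real.cos (α i + β j - μ) := by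
    intro i j
    apply Real.cos_pos_of_mem_Ioo
    have hb1 : |α i - (α im + α iM) / 2| ≤ (α iM - α im) / 2 := by
      have h1 := hiM i (Finset.mem_univ i)
      have h2 := him i (Finset.mem_univ i)
      rw [abs_le]; constructor <;> linarith
    have hb2 : |β j - (β jm + β jM) / 2| ≤ (β jM - β jm) / 2 := by
      have h1 := hjM j (Finset.mem_univ j)
      have h2 := hjm j (Finset.mem_univ j)
      rw [abs_le]; constructor <;> linarith
    have hw1 : (α iM - α im) / 2 < π / 4 := by
      have := abs_lt.1 (hαd iM im); linarith [this.2]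
    have hw2 : (β jM - β jm) / 2 < π / 4 := by
      have := abs_lt.1 (hβd jM jm); linarith [this.2]
    have hsplit : α i + β j - μ
        = (α i - (α im + α iM) / 2) + (β j - (β jm + β jM) / 2) := by
      rw [hμ]; ring
    have habs : |α i + β j - μ| < π / 2 := by
      rw [hsplit]
      calc |(α i - (α im + α iM) / 2) + (β j - (β jm + β jM) / 2)|
          ≤ |α i - (α im + α iM) / 2| + |β j - (β jm + β jM) / 2| := abs_add_le _ _
        _ < π / 2 := by linarith
    have := abs_lt.1 habs
    exact ⟨by linarith [this.1], this.2⟩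
  -- separating direction
  set γ : ℝ := θ i0 + Θ i0 + μ with hγ
  have hlin : IsLinearMap ℝ (fun w : ℂ => Real.cos γ * w.re + Real.sin γ * w.im) := by
    constructor
    · intro x y; simp [Complex.add_re, Complex.add_im]; ring
    · intro c x
      simp only [Complex.smul_re, Complex.smul_im, smul_eq_mul]
      ring
  have hconv : Convex ℝ {w : ℂ | 0 < Real.cos γ * w.re + Real.sin γ * w.im} :=
    convex_halfSpace_gt hlin 0
  have hsub : {z : ℂ | ∃ i j, z = Complex.exp (Complex.I * (θ i + Θ j))}
      ⊆ {w : ℂ | 0 < Real.cos γ * w.re + Real.sin γ * w.im} := by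
    rintro z ⟨i, j, rfl⟩
    have e : Complex.I * ((θ i : ℂ) + (Θ j : ℂ)) = ((θ i + Θ j : ℝ) : ℂ) * Complex.I := by
      push_cast; ring
    show 0 < Real.cos γ * (Complex.exp (Complex.I * ((θ i : ℂ) + (Θ j : ℂ)))).re
        + Real.sin γ * (Complex.exp (Complex.I * ((θ i : ℂ) + (Θ j : ℂ)))).im
    rw [e, Complex.exp_ofReal_mul_I_re, Complex.exp_ofReal_mul_I_im]
    have hcs : Real.cos γ * Real.cos (θ i + Θ j) + Real.sin γ * Real.sin (θ i + Θ j)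
        = Real.cos ((θ i + Θ j) - γ) := by
      rw [Real.cos_sub]; ring
    rw [hcs]
    obtain ⟨n, hn⟩ := hkα i
    obtain ⟨m, hm⟩ := hkβ j
    have hexpand : ((n + m : ℤ) : ℝ) * (2 * π) = (n : ℝ) * (2 * π) + (m : ℝ) * (2 * π) := by
      push_cast; ring
    have hsum : (θ i + Θ j) - γ = (α i + β j - μ) + ((n + m : ℤ) : ℝ) * (2 * π) := by
      rw [hγ, hexpand]
      linarith
    rw [hsum, Real.cos_add_int_mul_two_pi]
    exact hkey i j
  have h0 := convexHull_min hsub hconv h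
  simp only [Set.mem_setOf_eq, Complex.zero_re, Complex.zero_im, mul_zero, add_zero] at h0
  exact lt_irrefl 0 h0
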